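/- Consider the functions I₀(h) and J₀(h) given by I₀(h) = 2∫₀^{x_h⁺} √(h−Ψ₁(x)) dx and J₀(h) = −2∫₀^{x_h⁺} σ₁'(x)√(h−Ψ₁(x)) dx, where Ψ₁(x) = −x² + x on (0,1/2), Ψ₁(x_h⁺) = h, and σ₁'(x) = 2x − 1. If c₀I₀(h) + c₁J₀(h) = 0 for all h ∈ (0, 1/4), then c₀ = c₁ = 0. -/

import Mathlib

open Set intervalIntegral

/-- tangent upper bound for sqrt at u = 1/36 -/
lemma my_sqrt_ub (u : ℝ) (hu : 0 ≤ u) : Real.sqrt u ≤ 3*u + 1/12 := by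
  nlinarith [sq_nonneg (Real.sqrt u - 1/6), Real.sq_sqrt hu, Real.sqrt_nonneg u]

/-- tangent-type quadratic lower bound for sqrt, touching at u = 9/64 -/
lemma my_sqrt_lb (u : ℝ) (hu : 0 ≤ u) : 4*u - (256/27)*u^2 ≤ Real.sqrt u := by
  nlinarith [Real.sq_sqrt hu, Real.sqrt_nonneg u,
    mul_nonneg (mul_nonneg (Real.sqrt_nonneg u) (sq_nonneg (Real.sqrt u - 3/8)))
      (by positivity : (0:ℝ) ≤ Real.sqrt u + 3/4)]

lemma my_poly_hd (a b c d e : ℝ) (t : ℝ) :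
    HasDerivAt (fun y : ℝ => a*y + b*y^2 + c*y^3 + d*y^4 + e*y^5)
      (a + 2*b*t + 3*c*t^2 + 4*d*t^3 + 5*e*t^4) t := by
  have h1 := (hasDerivAt_id t).const_mul a
  have h2 := (hasDerivAt_pow 2 t).const_mul b
  have h3 := (hasDerivAt_pow 3 t).const_mul c
  have h4 := (hasDerivAt_pow 4 t).const_mul d
  have h5 := (hasDerivAt_pow 5 t).const_mul e
  refine ((((h1.add h2).add h3).add h4).add h5).congr_deriv ?_
  push_cast
  ring

/-- J integral computation -/
lemma my_J (h x : ℝ) (hx0 : 0 < x) (hroot : x^2 - x + h = 0)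
    (hpos : ∀ t ∈ Ioo (0:ℝ) x, 0 < t^2 - t + h) :
    ∫ t in (0:ℝ)..x, (2*t-1) * Real.sqrt (t^2 - t + h)
      = -(2/3) * Real.sqrt h ^ 3 := by
  have hcont : ContinuousOn (fun t : ℝ => (2/3) * Real.sqrt (t^2 - t + h) ^ 3) (Icc 0 x) := by
    apply Continuous.continuousOn
    have : Continuous fun t : ℝ => t^2 - t + h := by continuity
    exact (continuous_const.mul ((Real.continuous_sqrt.comp this).pow 3))
  have hint : IntervalIntegrable (fun t : ℝ => (2*t-1) * Real.sqrt (t^2 - t + h)) MeasureTheory.volume 0 x := by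
    apply Continuous.intervalIntegrable
    have : Continuous fun t : ℝ => t^2 - t + h := by continuity
    exact (by continuity : Continuous fun t : ℝ => 2*t-1).mul (Real.continuous_sqrt.comp this)
  have hderiv : ∀ t ∈ Ioo (0:ℝ) x,
      HasDerivAt (fun t : ℝ => (2/3) * Real.sqrt (t^2 - t + h) ^ 3)
        ((2*t-1) * Real.sqrt (t^2 - t + h)) t := by
    intro t ht
    have hq : 0 < t^2 - t + h := hpos t ht
    have hq' : Real.sqrt (t^2 - t + h) ≠ 0 := (Real.sqrt_pos.mpr hq).ne'
    have h1 : HasDerivAt (fun y : ℝ => y^2 - y + h) (2*t - 1) t := by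
      have := ((hasDerivAt_pow 2 t).sub (hasDerivAt_id t)).add_const h
      simpa using this
    have h2 : HasDerivAt (fun y : ℝ => Real.sqrt (y^2 - y + h))
        (1 / (2 * Real.sqrt (t^2 - t + h)) * (2*t - 1)) t :=
      (Real.hasDerivAt_sqrt hq.ne').comp t h1
    have h3 := (h2.pow 3).const_mul (2/3 : ℝ)
    refine h3.congr_deriv ?_
    have hsq : Real.sqrt (t^2 - t + h) ^ 2 = t^2 - t + h := Real.sq_sqrt hq.le
    push_cast
    field_simp
  have := intervalIntegral.integral_eq_sub_of_hasDerivAt_of_le hx0.le hcont hderiv hint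
  rw [this, hroot]
  norm_num

lemma my_A1_ub :
    ∫ t in (0:ℝ)..(1/16), Real.sqrt (t^2 - t + 15/256) ≤ 65/6144 := by
  have hmono : ∫ t in (0:ℝ)..(1/16), Real.sqrt (t^2 - t + 15/256)
      ≤ ∫ t in (0:ℝ)..(1/16), (3*(t^2 - t + 15/256) + 1/12) := by
    apply intervalIntegral.integral_mono_on (by norm_num : (0:ℝ) ≤ 1/16)
    · exact (Real.continuous_sqrt.comp (by continuity)).intervalIntegrable _ _
    · exact (by continuity : Continuous fun t : ℝ => 3*(t^2 - t + 15/256) + 1/12).intervalIntegrable _ _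
    · intro t ht
      apply my_sqrt_ub
      nlinarith [ht.1, ht.2]
  have hval : ∫ t in (0:ℝ)..(1/16), (3*(t^2 - t + 15/256) + 1/12) = 65/6144 := by
    have := intervalIntegral.integral_eq_sub_of_hasDerivAt
      (f := fun y : ℝ => (199/768)*y + (-3/2)*y^2 + 1*y^3 + 0*y^4 + 0*y^5)
      (f' := fun t : ℝ => 3*(t^2 - t + 15/256) + 1/12)
      (a := 0) (b := 1/16)
      (fun t _ => (my_poly_hd (199/768) (-3/2) 1 0 0 t).congr_deriv (by ring))
      ((by continuity : Continuous fun t : ℝ => 3*(t^2 - t + 15/256) + 1/12).intervalIntegrable _ _)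
    rw [this]
    norm_num
  linarith

lemma my_A2_lb :
    89/960 ≤ ∫ t in (0:ℝ)..(3/8), Real.sqrt (t^2 - t + 15/64) := by
  have hmono : ∫ t in (0:ℝ)..(3/8), (4*(t^2 - t + 15/64) - (256/27)*(t^2 - t + 15/64)^2)
      ≤ ∫ t in (0:ℝ)..(3/8), Real.sqrt (t^2 - t + 15/64) := by
    apply intervalIntegral.integral_mono_on (by norm_num : (0:ℝ) ≤ 3/8)
    · exact (by continuity : Continuous fun t : ℝ => 4*(t^2 - t + 15/64) - (256/27)*(t^2 - t + 15/64)^2).intervalIntegrable _ _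
    · exact (Real.continuous_sqrt.comp (by continuity)).intervalIntegrable _ _
    · intro t ht
      apply my_sqrt_lb
      nlinarith [ht.1, ht.2]
  have hval : ∫ t in (0:ℝ)..(3/8), (4*(t^2 - t + 15/64) - (256/27)*(t^2 - t + 15/64)^2) = 89/960 := by
    have := intervalIntegral.integral_eq_sub_of_hasDerivAt
      (f := fun y : ℝ => (5/12)*y + (2/9)*y^2 + (-268/81)*y^3 + (128/27)*y^4 + (-256/135)*y^5)
      (f' := fun t : ℝ => 4*(t^2 - t + 15/64) - (256/27)*(t^2 - t + 15/64)^2)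
      (a := 0) (b := 3/8)
      (fun t _ => (my_poly_hd (5/12) (2/9) (-268/81) (128/27) (-256/135) t).congr_deriv (by ring))
      ((by continuity : Continuous fun t : ℝ => 4*(t^2 - t + 15/64) - (256/27)*(t^2 - t + 15/64)^2).intervalIntegrable _ _)
    rw [this]
    norm_num
  linarith

theorem linear_independence_I0_J0
    (xh : ℝ → ℝ)
    (hxh : ∀ h ∈ Ioo (0:ℝ) (1/4), xh h ∈ Ioo (0:ℝ) (1/2) ∧ -(xh h) ^ 2 + xh h = h)
    (c₀ c₁ : ℝ)
    (hzero : ∀ h ∈ Ioo (0:ℝ) (1/4),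
      c₀ * (2 * ∫ x in (0:ℝ)..xh h, Real.sqrt (h - (-(x ^ 2) + x))) +
      c₁ * (-2 * ∫ x in (0:ℝ)..xh h,
          (2 * x - 1) * Real.sqrt (h - (-(x ^ 2) + x))) = 0) :
    c₀ = 0 ∧ c₁ = 0 := by
  obtain ⟨⟨ha1, hb1⟩, he1⟩ := hxh (15/256) (by norm_num)
  obtain ⟨⟨ha2, hb2⟩, he2⟩ := hxh (15/64) (by norm_num)
  have hx1 : xh (15/256) = 1/16 := by
    have hf : (xh (15/256) - 1/16) * (xh (15/256) - 15/16) = 0 := by nlinarith [he1]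
    rcases mul_eq_zero.mp hf with h | h
    · linarith
    · linarith
  have hx2 : xh (15/64) = 3/8 := by
    have hf : (xh (15/64) - 3/8) * (xh (15/64) - 5/8) = 0 := by nlinarith [he2]
    rcases mul_eq_zero.mp hf with h | h
    · linarith
    · linarith
  have E1 := hzero (15/256) (by norm_num)
  have E2 := hzero (15/64) (by norm_num)
  rw [hx1] at E1
  rw [hx2] at E2
  simp only [show ∀ t : ℝ, (15/256:ℝ) - (-(t^2) + t) = t^2 - t + 15/256 from fun t => by ring] at E1
  simp only [show ∀ t : ℝ, (15/64:ℝ) - (-(t^2) + t) = t^2 - t + 15/64 from fun t => by ring] at E2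
  have J1 : ∫ t in (0:ℝ)..(1/16), (2*t-1) * Real.sqrt (t^2 - t + 15/256)
      = -(2/3) * Real.sqrt (15/256) ^ 3 := by
    apply my_J (15/256) (1/16) (by norm_num) (by norm_num)
    intro t ht
    nlinarith [mul_pos (by linarith [ht.2] : (0:ℝ) < 1/16 - t)
      (by linarith [ht.2] : (0:ℝ) < 15/16 - t)]
  have J2 : ∫ t in (0:ℝ)..(3/8), (2*t-1) * Real.sqrt (t^2 - t + 15/64)
      = -(2/3) * Real.sqrt (15/64) ^ 3 := by
    apply my_J (15/64) (3/8) (by norm_num) (by norm_num)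
    intro t ht
    nlinarith [mul_pos (by linarith [ht.2] : (0:ℝ) < 3/8 - t)
      (by linarith [ht.2] : (0:ℝ) < 5/8 - t)]
  rw [J1] at E1
  rw [J2] at E2
  set S := Real.sqrt (15/256) with hSdef
  have hS : 0 < S := Real.sqrt_pos.mpr (by norm_num)
  have h2S : Real.sqrt (15/64) = 2 * S := by
    rw [hSdef, show (15/64:ℝ) = 2^2 * (15/256) by norm_num,
      Real.sqrt_mul (by positivity), Real.sqrt_sq (by norm_num : (0:ℝ) ≤ 2)]
  rw [h2S] at E2
  set A1 := ∫ t in (0:ℝ)..(1/16), Real.sqrt (t^2 - t + 15/256) with hA1def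
  set A2 := ∫ t in (0:ℝ)..(3/8), Real.sqrt (t^2 - t + 15/64) with hA2def
  have hb1' : A1 ≤ 65/6144 := my_A1_ub
  have hb2' : 89/960 ≤ A2 := my_A2_lb
  have key : c₀ * (A2 - 8*A1) = 0 := by linear_combination (1/2) * E2 - 4 * E1
  have hpos : 0 < A2 - 8*A1 := by linarith
  have hc0 : c₀ = 0 := by
    rcases mul_eq_zero.mp key with h | h
    · exact h
    · linarith
  refine ⟨hc0, ?_⟩
  have hc1 : c₁ * S^3 = 0 := by linear_combination (3/4) * E1 - (3/2) * A1 * hc0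
  rcases mul_eq_zero.mp hc1 with h | h
  · exact h
  · exact absurd h (by positivity)
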